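/- Let 1 ≤ d ≤ n−1 and let M be an n×d real matrix written in block form M = (G; Σ), where G is an invertible d×d real matrix (the top d rows) and Σ is an (n−d)×d real matrix (the bottom n−d rows). Suppose the (n−d)d entries of Σ form a family that is algebraically independent over the field ℚ(F), where F is the set of entries of G. Then for every e ∈ {1,…,n−1}, the subspace of ℝ^n spanned by the columns of M is (e,1)-irrational. -/

import Mathlib

noncomputable section

open Finset Module

/-- A vector of `ℝⁿ` with integer coordinates. -/
def IsIntVec {n : ℕ} (v : EuclideanSpace ℝ (Fin n)) : Prop :=
  ∀ i, ∃ z : ℤ, v i = (z : ℝ)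

/-- A rational subspace of `ℝⁿ`: one spanned by vectors with rational coordinates. -/
def IsRationalSubspace {n : ℕ} (B : Submodule ℝ (EuclideanSpace ℝ (Fin n))) : Prop :=
  ∃ s : Set (EuclideanSpace ℝ (Fin n)),
    (∀ v ∈ s, ∀ i, ∃ q : ℚ, v i = (q : ℝ)) ∧ Submodule.span ℝ s = B

/-- `A` is `(e,j)`-irrational: every rational subspace `B` of dimension `e` satisfies
`dim (A ⊓ B) < j + g(dim A, e, n)` where `g(d,e,n) = max 0 (d+e-n)`. -/
def IsIrrational {n : ℕ} (A : Submodule ℝ (EuclideanSpace ℝ (Fin n))) (e j : ℕ) : Prop :=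
  ∀ B : Submodule ℝ (EuclideanSpace ℝ (Fin n)),
    IsRationalSubspace B → finrank ℝ B = e →
      finrank ℝ ↥(A ⊓ B) < j + (finrank ℝ A + e - n)

/-- The angle `ω(X,Y) = ‖X∧Y‖ / (‖X‖·‖Y‖)`. -/
def omegaAngle {n : ℕ} (X Y : EuclideanSpace ℝ (Fin n)) : ℝ :=
  Real.sqrt (‖X‖ ^ 2 * ‖Y‖ ^ 2 - (inner ℝ X Y : ℝ) ^ 2) / (‖X‖ * ‖Y‖)

/-- First angle `ψ₁(A,B)` between two subspaces. -/
def psiOne {n : ℕ} (A B : Submodule ℝ (EuclideanSpace ℝ (Fin n))) : ℝ :=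
  sInf {t | ∃ X ∈ A, X ≠ 0 ∧ ∃ Y ∈ B, Y ≠ 0 ∧ t = omegaAngle X Y}

/-- `‖X₁ ∧ ⋯ ∧ X_e‖`, as the square root of the Gram determinant. -/
def gramNorm {n e : ℕ} (X : Fin e → EuclideanSpace ℝ (Fin n)) : ℝ :=
  Real.sqrt (Matrix.of fun i j : Fin e => (inner ℝ (X i) (X j) : ℝ)).det

/-- `X` is a `ℤ`-basis of the lattice `B ∩ ℤⁿ`. -/
def IsZBasis {n e : ℕ} (X : Fin e → EuclideanSpace ℝ (Fin n))
    (B : Submodule ℝ (EuclideanSpace ℝ (Fin n))) : Prop :=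
  (∀ i, X i ∈ B) ∧ (∀ i, IsIntVec (X i)) ∧ LinearIndependent ℝ X ∧
    ∀ v ∈ B, IsIntVec v → ∃ c : Fin e → ℤ, v = ∑ i, (c i : ℝ) • X i

/-- The height `H(B)` of a rational subspace: the common value of `‖X₁ ∧ ⋯ ∧ X_e‖`
over `ℤ`-bases of the lattice `B ∩ ℤⁿ`. -/
def height {n : ℕ} (B : Submodule ℝ (EuclideanSpace ℝ (Fin n))) : ℝ :=
  sSup {h | ∃ e : ℕ, ∃ X : Fin e → EuclideanSpace ℝ (Fin n), IsZBasis X B ∧ h = gramNorm X}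

/-- The Diophantine exponent `μ_n(A|e)₁ ∈ ℝ ∪ {+∞}`. -/
def diophExp {n : ℕ} (A : Submodule ℝ (EuclideanSpace ℝ (Fin n))) (e : ℕ) : EReal :=
  sSup {x : EReal | ∃ μ : ℝ, x = (μ : ℝ) ∧ 0 < μ ∧
    {B : Submodule ℝ (EuclideanSpace ℝ (Fin n)) |
      IsRationalSubspace B ∧ finrank ℝ B = e ∧ psiOne A B ≤ height B ^ (-μ)}.Infinite}

/-- The `j`-th column of the block matrix `M = (G; S)` viewed as a vector of `ℝⁿ`:
rows `0,…,d−1` come from `G`, rows `d,…,n−1` from `S`. -/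
def colVec (n d : ℕ) (G : Matrix (Fin d) (Fin d) ℝ)
    (S : Matrix (Fin (n - d)) (Fin d) ℝ) (j : Fin d) : EuclideanSpace ℝ (Fin n) :=
  WithLp.toLp 2 fun i : Fin n => if h : (i : ℕ) < d then G ⟨i, h⟩ j
    else S ⟨(i : ℕ) - d, by have := i.isLt; omega⟩ j

namespace S6

/-- Evaluation at a coordinate, as a linear map. -/
def evi {N : ℕ} (i : Fin N) : EuclideanSpace ℝ (Fin N) →ₗ[ℝ] ℝ where
  toFun x := x i
  map_add' _ _ := rfl
  map_smul' _ _ := rfl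

lemma sum_coord {N : ℕ} {ι : Type*} [Fintype ι] (c : ι → ℝ)
    (v : ι → EuclideanSpace ℝ (Fin N)) (i : Fin N) :
    (∑ a, c a • v a) i = ∑ a, c a * v a i := by
  show evi i (∑ a, c a • v a) = _
  rw [map_sum]
  simp [evi]
  rfl

lemma gram_det_ne_zero_iff {N : ℕ} {ι : Type*} [Fintype ι] [DecidableEq ι]
    (v : ι → EuclideanSpace ℝ (Fin N)) :
    LinearIndependent ℝ v ↔ (Matrix.of fun a b : ι => ∑ i, v a i * v b i).det ≠ 0 := by
  set M : Matrix ι ι ℝ := Matrix.of fun a b : ι => ∑ i, v a i * v b i with hM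
  have hmv : ∀ c : ι → ℝ, ∀ a, M.mulVec c a = ∑ i, v a i * (∑ b, c b * v b i) := by
    intro c a
    simp only [hM, Matrix.mulVec, dotProduct, Matrix.of_apply, Finset.sum_mul,
      Finset.mul_sum]
    rw [Finset.sum_comm]
    exact Finset.sum_congr rfl fun i _ => Finset.sum_congr rfl fun b _ => by ring
  constructor
  · intro hv
    refine IsUnit.ne_zero ((Matrix.isUnit_iff_isUnit_det M).mp
      (Matrix.mulVec_injective_iff_isUnit.mp ?_))
    have key : ∀ c : ι → ℝ, M.mulVec c = 0 → c = 0 := by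
      intro c hc
      have h1 : ∀ a, (∑ i, v a i * (∑ b, c b * v b i)) = 0 := by
        intro a; rw [← hmv c a, hc]; rfl
      have hx0 : ∑ i, (∑ a, c a * v a i) ^ 2 = 0 := by
        calc ∑ i, (∑ a, c a * v a i) ^ 2
            = ∑ a, c a * (∑ i, v a i * (∑ b, c b * v b i)) := by
              simp only [pow_two, Finset.sum_mul, Finset.mul_sum]
              rw [Finset.sum_comm]
              exact Finset.sum_congr rfl fun i _ => Finset.sum_congr rfl fun a _ =>
                Finset.sum_congr rfl fun b _ => by ring
          _ = 0 := by simp [h1]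
      have hz : ∀ i, ∑ a, c a * v a i = 0 := by
        intro i
        have := (Finset.sum_eq_zero_iff_of_nonneg
          (fun i _ => sq_nonneg (∑ a, c a * v a i))).mp hx0 i (Finset.mem_univ i)
        exact pow_eq_zero_iff (by norm_num) |>.mp this
      have hsum : ∑ a, c a • v a = 0 := by
        ext i
        rw [sum_coord]
        exact hz i
      exact funext (Fintype.linearIndependent_iff.mp hv c hsum)
    intro c₁ c₂ h
    have := key (c₁ - c₂) (by rw [Matrix.mulVec_sub, h, sub_self])
    exact sub_eq_zero.mp this
  · intro hdet
    rw [Fintype.linearIndependent_iff]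
    intro c hc
    have hS : ∀ i, ∑ b, c b * v b i = 0 := by
      intro i; rw [← sum_coord, hc]; rfl
    have h0 : M.mulVec c = 0 := by
      funext a; rw [hmv]; simp [hS]
    have hinj := Matrix.mulVec_injective_iff_isUnit.mpr
      ((Matrix.isUnit_iff_isUnit_det M).mpr (isUnit_iff_ne_zero.mpr hdet))
    have : c = 0 := hinj (h0.trans (Matrix.mulVec_zero M).symm)
    exact fun i => congrFun this i

end S6

/-- Projection to the first `d` coordinates, as a linear map. -/
def projd (n d : ℕ) (hdn : d ≤ n) : EuclideanSpace ℝ (Fin n) →ₗ[ℝ] (Fin d → ℝ) where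
  toFun v i := v (Fin.castLE hdn i)
  map_add' _ _ := rfl
  map_smul' _ _ := rfl

namespace S6

lemma projd_colVec {n d : ℕ} (hdn : d ≤ n) (G : Matrix (Fin d) (Fin d) ℝ)
    (T : Matrix (Fin (n - d)) (Fin d) ℝ) (j : Fin d) :
    projd n d hdn (colVec n d G T j) = fun i => G i j := by
  funext i
  show colVec n d G T j (Fin.castLE hdn i) = G i j
  simp [colVec, i.isLt]

lemma colVec_li {n d : ℕ} (hdn : d ≤ n) {G : Matrix (Fin d) (Fin d) ℝ}
    (hG : IsUnit G.det) (T : Matrix (Fin (n - d)) (Fin d) ℝ) :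
    LinearIndependent ℝ (colVec n d G T) := by
  have h : LinearIndependent ℝ (⇑(projd n d hdn) ∘ colVec n d G T) := by
    have he : ⇑(projd n d hdn) ∘ colVec n d G T = fun j => G.transpose j := by
      funext j
      exact projd_colVec hdn G T j
    rw [he]
    exact Matrix.linearIndependent_cols_iff_isUnit.mpr ((Matrix.isUnit_iff_isUnit_det G).mpr hG)
  exact h.of_comp (projd n d hdn)

lemma top_eq_sup {n d : ℕ} (hdn : d ≤ n) {G : Matrix (Fin d) (Fin d) ℝ}
    (hG : IsUnit G.det) :
    LinearMap.ker (projd n d hdn) ⊔ Submodule.span ℝ (Set.range (colVec n d G 0)) = ⊤ := by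
  rw [eq_top_iff]
  intro x _
  set a : Fin d → ℝ := G⁻¹.mulVec (projd n d hdn x) with ha
  set y := ∑ j, a j • colVec n d G 0 j with hy
  have hyx : projd n d hdn y = projd n d hdn x := by
    rw [hy, map_sum]
    funext i
    simp only [map_smul, projd_colVec, Finset.sum_apply, Pi.smul_apply, smul_eq_mul]
    have h1 : ∑ j, a j * G i j = G.mulVec a i := by
      simp [Matrix.mulVec, dotProduct, mul_comm]
    rw [h1, ha, Matrix.mulVec_mulVec, Matrix.mul_nonsing_inv _ hG, Matrix.one_mulVec]
  have h1 : x - y ∈ LinearMap.ker (projd n d hdn) := by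
    rw [LinearMap.mem_ker, map_sub, hyx, sub_self]
  have h2 : y ∈ Submodule.span ℝ (Set.range (colVec n d G 0)) :=
    Submodule.sum_mem _ fun j _ => Submodule.smul_mem _ _ (Submodule.subset_span ⟨j, rfl⟩)
  have hxy : x = (x - y) + y := by abel
  rw [hxy]
  exact Submodule.add_mem _ (Submodule.mem_sup_left h1) (Submodule.mem_sup_right h2)

end S6


/-- If `G` is invertible and the entries of `S` are algebraically
independent over `ℚ(F)` (`F` the entries of `G`), then the column span of `M = (G; S)`
is `(e,1)`-irrational for every `e ∈ {1,…,n−1}`. -/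
theorem statement6 (n d : ℕ) (hd1 : 1 ≤ d) (hd2 : d ≤ n - 1)
    (G : Matrix (Fin d) (Fin d) ℝ) (S : Matrix (Fin (n - d)) (Fin d) ℝ)
    (hG : IsUnit G.det)
    (hS : AlgebraicIndependent (IntermediateField.adjoin ℚ {x : ℝ | ∃ i j, G i j = x})
      fun p : Fin (n - d) × Fin d => S p.1 p.2) :
    ∀ e, 1 ≤ e → e ≤ n - 1 →
      IsIrrational (Submodule.span ℝ (Set.range (colVec n d G S))) e 1 := by
  classical
  intro e he1 he2 B hBrat hBe
  obtain ⟨s, hs_rat, hs_span⟩ := hBrat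
  have hdn : d ≤ n := by omega
  have hdlt : d < n := by omega
  have helt : e < n := by omega
  set K := IntermediateField.adjoin ℚ {x : ℝ | ∃ i j, G i j = x} with hK
  set A := Submodule.span ℝ (Set.range (colVec n d G S)) with hA
  have hAind : LinearIndependent ℝ (colVec n d G S) := S6.colVec_li hdn hG S
  have hAd : finrank ℝ A = d := by
    rw [hA, finrank_span_eq_card hAind, Fintype.card_fin]
  -- rational basis of B
  obtain ⟨t, hts, htspan, htind⟩ := exists_linearIndependent ℝ s
  have htB : Submodule.span ℝ t = B := htspan.trans hs_span
  have htfin : t.Finite := htind.setFinite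
  haveI := htfin.fintype
  have htcard : t.toFinset.card = e := by
    rw [← hBe, ← htB, finrank_span_set_eq_card htind]
  -- the reference columns and kernel subspace
  set c := colVec n d G (0 : Matrix (Fin (n - d)) (Fin d) ℝ) with hc
  set E := LinearMap.ker (projd n d hdn) with hE
  set km := min d (n - e) with hkm
  -- greedy construction
  have greedy : ∀ k, k ≤ km → ∃ (J : Finset (Fin d)) (w : Fin d → EuclideanSpace ℝ (Fin n)),
      J.card = k ∧ (∀ j, projd n d hdn (w j) = projd n d hdn (c j)) ∧
      e + k ≤ finrank ℝ ↥(B ⊔ Submodule.span ℝ ↑(J.image w)) := by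
    intro k
    induction k with
    | zero =>
      intro _
      refine ⟨∅, c, rfl, fun j => rfl, ?_⟩
      simp only [add_zero]
      calc e = finrank ℝ ↥B := hBe.symm
        _ ≤ _ := Submodule.finrank_mono le_sup_left
    | succ k ih =>
      intro hk1
      obtain ⟨J, w, hcard, hπ, hrank⟩ := ih (by omega)
      set W := B ⊔ Submodule.span ℝ (↑(J.image w) : Set (EuclideanSpace ℝ (Fin n))) with hW
      have hWle : finrank ℝ ↥W ≤ e + k := by
        have h1 := Submodule.finrank_sup_add_finrank_inf_eq B
          (Submodule.span ℝ (↑(J.image w) : Set (EuclideanSpace ℝ (Fin n))))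
        rw [← hW] at h1
        have h2 : finrank ℝ
            ↥(Submodule.span ℝ (↑(J.image w) : Set (EuclideanSpace ℝ (Fin n)))) ≤ k := by
          have h3 := finrank_span_le_card (R := ℝ)
            (↑(J.image w) : Set (EuclideanSpace ℝ (Fin n)))
          simp only [Finset.toFinset_coe] at h3
          exact h3.trans (Finset.card_image_le.trans hcard.le)
        rw [hBe] at h1
        omega
      have hkm2 : k + 1 ≤ n - e := le_trans hk1 (min_le_right _ _)
      have hkd : k + 1 ≤ d := le_trans hk1 (min_le_left _ _)
      have hWne : W ≠ ⊤ := by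
        intro hWtop
        have : finrank ℝ ↥W = n := by
          rw [hWtop, finrank_top, finrank_euclideanSpace_fin]
        omega
      have hex : ∃ j, j ∉ J ∧ ∃ x, projd n d hdn x = projd n d hdn (c j) ∧ x ∉ W := by
        by_contra hcon
        push_neg at hcon
        obtain ⟨j₀, hj₀⟩ : ∃ j, j ∉ J := by
          by_contra hall; push_neg at hall
          have hJu : J = Finset.univ := Finset.eq_univ_iff_forall.mpr hall
          rw [hJu, Finset.card_univ, Fintype.card_fin] at hcard
          omega
        have hcj : ∀ j, j ∉ J → c j ∈ W := fun j hj => hcon j hj (c j) rfl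
        have hEW : E ≤ W := by
          intro σ hσ
          have h1 : c j₀ + σ ∈ W := hcon j₀ hj₀ _
            (by rw [map_add, LinearMap.mem_ker.mp hσ, add_zero])
          have h2 := Submodule.sub_mem W h1 (hcj j₀ hj₀)
          simpa using h2
        have hcall : ∀ j, c j ∈ W := by
          intro j
          by_cases hj : j ∈ J
          · have hwj : w j ∈ W := Submodule.mem_sup_right (Submodule.subset_span
              (by exact_mod_cast Finset.mem_image_of_mem w hj))
            have hd3 : w j - c j ∈ E := by
              rw [hE, LinearMap.mem_ker, map_sub, hπ j, sub_self]
            have h4 := Submodule.sub_mem W hwj (hEW hd3)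
            simpa using h4
          · exact hcj j hj
        have htop : (⊤ : Submodule ℝ (EuclideanSpace ℝ (Fin n))) ≤ W := by
          rw [← S6.top_eq_sup hdn hG, ← hE, ← hc]
          refine sup_le hEW (Submodule.span_le.mpr ?_)
          rintro x ⟨j, rfl⟩
          exact hcall j
        exact hWne (top_le_iff.mp htop)
      obtain ⟨j, hjJ, x, hπx, hxW⟩ := hex
      refine ⟨insert j J, Function.update w j x, ?_, ?_, ?_⟩
      · rw [Finset.card_insert_of_notMem hjJ, hcard]
      · intro j'
        rcases eq_or_ne j' j with rfl | hne
        · rw [Function.update_self]; exact hπx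
        · rw [Function.update_of_ne hne]; exact hπ j'
      · have himgJ : J.image (Function.update w j x) = J.image w :=
          Finset.image_congr (fun j' hj' =>
            Function.update_of_ne (by rintro rfl; exact hjJ hj') _ _)
        have himg : ((insert j J).image (Function.update w j x) : Set (EuclideanSpace ℝ (Fin n)))
            = insert x (↑(J.image w)) := by
          rw [Finset.image_insert, Function.update_self, himgJ, Finset.coe_insert]
        rw [himg, Submodule.span_insert]
        have hre : B ⊔ (Submodule.span ℝ {x}
              ⊔ Submodule.span ℝ (↑(J.image w) : Set (EuclideanSpace ℝ (Fin n))))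
            = W ⊔ Submodule.span ℝ {x} := by
          rw [hW, sup_comm (Submodule.span ℝ {x}), ← sup_assoc]
        rw [hre]
        have hlt : W < W ⊔ Submodule.span ℝ {x} := by
          refine lt_of_le_of_ne le_sup_left ?_
          intro heq
          exact hxW (heq ▸ Submodule.mem_sup_right (Submodule.mem_span_singleton_self x))
        have h5 := Submodule.finrank_lt_finrank_of_lt hlt
        omega
  obtain ⟨J, w, hJcard, hπw, hrk⟩ := greedy km le_rfl
  -- build the matrix Sig
  set Sig : Matrix (Fin (n - d)) (Fin d) ℝ :=
    (fun i' j => w j ⟨d + (i' : ℕ), by have := i'.isLt; omega⟩) with hSig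
  have hcolw : ∀ j, colVec n d G Sig j = w j := by
    intro j
    ext i
    by_cases h : (i : ℕ) < d
    · have h1 : w j i = c j i := congrFun (hπw j) ⟨(i : ℕ), h⟩
      rw [hc] at h1
      show colVec n d G Sig j i = w j i
      simp only [colVec, PiLp.toLp_apply, dif_pos h] at h1 ⊢
      exact h1.symm
    · show colVec n d G Sig j i = w j i
      simp only [colVec, PiLp.toLp_apply, dif_neg h, hSig]
      exact congrArg (w j) (Fin.ext (by simp; omega))
  have hrk2 : e + km ≤ finrank ℝ
      ↥(B ⊔ Submodule.span ℝ ↑(J.image (colVec n d G Sig))) := by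
    have himg : J.image (colVec n d G Sig) = J.image w :=
      Finset.image_congr (fun j _ => hcolw j)
    rw [himg]
    exact hrk
  -- extend t to an independent family inside t ∪ (chosen Sig-columns)
  set U : Set (EuclideanSpace ℝ (Fin n)) :=
    t ∪ ↑(J.image (colVec n d G Sig)) with hU
  have hspanU : Submodule.span ℝ U
      = B ⊔ Submodule.span ℝ ↑(J.image (colVec n d G Sig)) := by
    rw [hU, Submodule.span_union, htB]
  obtain ⟨b, hbU, htb, hUspanb, hbind⟩ :=
    exists_linearIndepOn_id_extension htind (show t ⊆ U by rw [hU]; exact Set.subset_union_left)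
  replace hbind : LinearIndependent ℝ ((↑) : b → EuclideanSpace ℝ (Fin n)) := hbind
  have hbfin : b.Finite := hbind.setFinite
  haveI := hbfin.fintype
  have hspanb : Submodule.span ℝ b = Submodule.span ℝ U :=
    le_antisymm (Submodule.span_mono hbU) (Submodule.span_le.mpr hUspanb)
  have hcardb : finrank ℝ ↥(Submodule.span ℝ U) = b.toFinset.card := by
    rw [← hspanb, finrank_span_set_eq_card hbind]
  haveI : Fintype ↥(b \ t) := (hbfin.subset Set.diff_subset).fintype
  have hjv : ∀ v : ↥(b \ t), ∃ j : Fin d,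
      colVec n d G Sig j = (v : EuclideanSpace ℝ (Fin n)) := by
    intro v
    have hvb : (v : EuclideanSpace ℝ (Fin n)) ∈ U := hbU v.2.1
    rcases hvb with hvt | hvi
    · exact absurd hvt v.2.2
    · rcases Finset.mem_image.mp (Finset.mem_coe.mp hvi) with ⟨j, _, hj⟩
      exact ⟨j, hj⟩
  choose jv hjv' using hjv
  set F' : ↥t ⊕ ↥(b \ t) → EuclideanSpace ℝ (Fin n) :=
    Sum.elim (fun a => (a : EuclideanSpace ℝ (Fin n)))
      (fun v => (v : EuclideanSpace ℝ (Fin n))) with hF'def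
  set FS : ↥t ⊕ ↥(b \ t) → EuclideanSpace ℝ (Fin n) :=
    Sum.elim (fun a => (a : EuclideanSpace ℝ (Fin n)))
      (fun v => colVec n d G S (jv v)) with hFSdef
  have hF' : LinearIndependent ℝ F' := by
    have hcomp : F' = (fun x : ↥b => (x : EuclideanSpace ℝ (Fin n)))
        ∘ (Equiv.Set.sumDiffSubset htb) := by
      funext z
      rcases z with a | v
      · simp [hF'def, Equiv.Set.sumDiffSubset_apply_inl]
      · simp [hF'def, Equiv.Set.sumDiffSubset_apply_inr]
    rw [hcomp]
    exact hbind.comp _ (Equiv.injective _)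
  -- polynomial transfer
  have hGm : ∀ i j, G i j ∈ K := fun i j => IntermediateField.subset_adjoin ℚ _ ⟨i, j, rfl⟩
  have hym : ∀ (a : ↥t) (i : Fin n), ((a : EuclideanSpace ℝ (Fin n)) i) ∈ K := by
    intro a i
    obtain ⟨q, hq⟩ := hs_rat a (hts a.2) i
    rw [hq]
    exact SubfieldClass.ratCast_mem K q
  set pc : ↥t ⊕ ↥(b \ t) → Fin n → MvPolynomial (Fin (n - d) × Fin d) K :=
    Sum.elim
      (fun a i => MvPolynomial.C (⟨(a : EuclideanSpace ℝ (Fin n)) i, hym a i⟩ : K))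
      (fun v i => if h : (i : ℕ) < d then MvPolynomial.C (⟨G ⟨i, h⟩ (jv v), hGm _ _⟩ : K)
        else MvPolynomial.X (⟨(i : ℕ) - d, by have := i.isLt; omega⟩, jv v)) with hpc
  have hev : ∀ (T : Matrix (Fin (n - d)) (Fin d) ℝ) (z : ↥t ⊕ ↥(b \ t)) (i : Fin n),
      MvPolynomial.aeval (fun p : Fin (n - d) × Fin d => T p.1 p.2) (pc z i)
        = Sum.elim (fun a : ↥t => (a : EuclideanSpace ℝ (Fin n)))
            (fun v => colVec n d G T (jv v)) z i := by
    intro T z i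
    rcases z with a | v
    · simp [hpc]
    · by_cases h : (i : ℕ) < d
      · simp [hpc, colVec, h]
      · simp [hpc, colVec, h]
  set P : MvPolynomial (Fin (n - d) × Fin d) K :=
    (Matrix.of fun z z' : ↥t ⊕ ↥(b \ t) => ∑ i, pc z i * pc z' i).det with hP
  have hevdet : ∀ (T : Matrix (Fin (n - d)) (Fin d) ℝ),
      MvPolynomial.aeval (fun p : Fin (n - d) × Fin d => T p.1 p.2) P
        = (Matrix.of fun z z' : ↥t ⊕ ↥(b \ t) => ∑ i,
            (Sum.elim (fun a : ↥t => (a : EuclideanSpace ℝ (Fin n)))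
              (fun v => colVec n d G T (jv v)) z i) *
            (Sum.elim (fun a : ↥t => (a : EuclideanSpace ℝ (Fin n)))
              (fun v => colVec n d G T (jv v)) z' i)).det := by
    intro T
    rw [hP, AlgHom.map_det]
    congr 1
    funext z z'
    simp only [AlgHom.mapMatrix_apply, Matrix.map_apply, Matrix.of_apply, map_sum, map_mul]
    exact Finset.sum_congr rfl fun i _ => by rw [hev, hev]
  have hFSig : (Sum.elim (fun a : ↥t => (a : EuclideanSpace ℝ (Fin n)))
      (fun v => colVec n d G Sig (jv v))) = F' := by
    funext z
    rcases z with a | v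
    · rfl
    · exact hjv' v
  have hgram' := (S6.gram_det_ne_zero_iff F').mp hF'
  have hPne : P ≠ 0 := by
    intro h0
    apply hgram'
    have h1 := hevdet Sig
    rw [h0, map_zero] at h1
    rw [hFSig] at h1
    exact h1.symm
  have hPS : MvPolynomial.aeval (fun p : Fin (n - d) × Fin d => S p.1 p.2) P ≠ 0 := by
    intro h0
    have hinj : Function.Injective (MvPolynomial.aeval (R := K)
        (fun p : Fin (n - d) × Fin d => S p.1 p.2)) := hS
    exact hPne (hinj (by rw [h0, map_zero]))
  have hFSind : LinearIndependent ℝ FS := by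
    rw [S6.gram_det_ne_zero_iff]
    intro h0
    apply hPS
    rw [hevdet S, ← hFSdef, h0]
  -- counting
  have hrankFS : finrank ℝ ↥(Submodule.span ℝ (Set.range FS))
      = Fintype.card (↥t ⊕ ↥(b \ t)) := by
    rw [finrank_span_eq_card hFSind]
  have hcardι : Fintype.card (↥t ⊕ ↥(b \ t)) = b.toFinset.card := by
    rw [Fintype.card_congr (Equiv.Set.sumDiffSubset htb), Set.toFinset_card]
  have hfinal1 : e + km ≤ finrank ℝ ↥(Submodule.span ℝ (Set.range FS)) := by
    rw [hrankFS, hcardι, ← hcardb, hspanU]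
    exact hrk2
  have hsub : Submodule.span ℝ (Set.range FS) ≤ A ⊔ B := by
    rw [Submodule.span_le]
    rintro x ⟨z, rfl⟩
    rcases z with a | v
    · have haB : (a : EuclideanSpace ℝ (Fin n)) ∈ B := htB ▸ Submodule.subset_span a.2
      exact Submodule.mem_sup_right haB
    · exact Submodule.mem_sup_left (Submodule.subset_span ⟨jv v, rfl⟩)
  have hfinrk : e + km ≤ finrank ℝ ↥(A ⊔ B) :=
    le_trans hfinal1 (Submodule.finrank_mono hsub)
  have hsum := Submodule.finrank_sup_add_finrank_inf_eq A B
  rw [hAd, hBe] at hsum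
  rw [hAd]
  rcases le_total d (n - e) with hcase | hcase
  · have hkmv : km = d := by rw [hkm, min_eq_left hcase]
    omega
  · have hkmv : km = n - e := by rw [hkm, min_eq_right hcase]
    omega
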